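/- The function I is nondecreasing on the interval [0, 1] and nonincreasing on the interval [1, 2]; consequently I(t) ≤ I(1) for every t ≥ 0, i.e. sup_{t ≥ 0} I(t) = I(1). -/

import Mathlib

open MeasureTheory Real intervalIntegral

/-- `log⁺ r = log (max 1 r)`. -/
noncomputable def logPlus (r : ℝ) : ℝ := Real.log (max 1 r)

/-- `I(t) = ∫₀¹ log⁺ |t + e^{2πiθ}| dθ − log⁺ t`. -/
noncomputable def Ifun (t : ℝ) : ℝ :=
  (∫ θ in (0:ℝ)..1, logPlus ‖(t + Complex.exp (2 * Real.pi * Complex.I * θ))‖)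
    - logPlus t

open Metric

noncomputable def E (θ : ℝ) : ℂ := Complex.exp (2 * Real.pi * Complex.I * θ)

noncomputable def F (t : ℝ) (θ : ℝ) : ℝ := logPlus (‖t + E θ‖)

lemma logPlus_nonneg (r : ℝ) : 0 ≤ logPlus r :=
  Real.log_nonneg (le_max_left _ _)

lemma logPlus_mono : Monotone logPlus := fun x y h =>
  Real.log_le_log (by positivity) (max_le_max le_rfl h)

lemma logPlus_of_le_one {r : ℝ} (h : r ≤ 1) : logPlus r = 0 := by
  unfold logPlus; rw [max_eq_left h, Real.log_one]

lemma logPlus_of_one_le {r : ℝ} (h : 1 ≤ r) : logPlus r = Real.log r := by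
  unfold logPlus; rw [max_eq_right h]

lemma logPlus_eq_max (hx : 0 < x) : logPlus x = max 0 (Real.log x) := by
  rcases le_total x 1 with h | h
  · rw [logPlus_of_le_one h, max_eq_left (Real.log_nonpos hx.le h)]
  · rw [logPlus_of_one_le h, max_eq_right (Real.log_nonneg h)]

lemma logPlus_continuous : Continuous logPlus :=
  (continuous_const.max continuous_id).log (fun x => by positivity)

lemma logPlus_add_le {x d : ℝ} (hd : 0 ≤ d) : logPlus (x + d) ≤ logPlus x + d := by
  set a := max 1 x with ha
  have ha1 : 1 ≤ a := le_max_left _ _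
  have h1 : max 1 (x + d) ≤ a + d := by
    rcases le_total 1 (x + d) with h | h
    · rw [max_eq_right h]; exact add_le_add (le_max_right _ _) le_rfl
    · rw [max_eq_left h]; linarith
  have h2 : Real.log (max 1 (x+d)) ≤ Real.log (a + d) :=
    Real.log_le_log (by positivity) h1
  have h3 : Real.log (a + d) - Real.log a ≤ d := by
    have hp : 0 < (a + d) / a := by positivity
    have := Real.log_le_sub_one_of_pos hp
    rw [Real.log_div (by positivity) (by positivity)] at this
    have h4 : (a + d) / a - 1 = d / a := by field_simp; ring
    have h5 : d / a ≤ d := by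
      calc d / a ≤ d / 1 := by
            apply div_le_div_of_nonneg_left hd one_pos ha1
          _ = d := div_one d
    linarith [this, h4 ▸ this]
  calc logPlus (x + d) ≤ Real.log (a + d) := h2
  _ ≤ Real.log a + d := by linarith
  _ = logPlus x + d := rfl

lemma E_abs (θ : ℝ) : ‖E θ‖ = 1 := by
  unfold E
  rw [Complex.norm_exp]
  norm_num [Complex.mul_re, Complex.mul_im]

lemma E_add_half (θ : ℝ) : E (θ + 1/2) = - E θ := by
  unfold E
  push_cast
  rw [mul_add, Complex.exp_add]
  have : (2 : ℂ) * Real.pi * Complex.I * (1/2) = Real.pi * Complex.I := by ring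
  rw [this, Complex.exp_pi_mul_I]
  ring

lemma abs_ofReal_add (t : ℝ) (w : ℂ) (hw : ‖w‖ = 1) :
    ‖t + w‖ = Real.sqrt (t^2 + 2*t*w.re + 1) := by
  have hns : Complex.normSq w = 1 := by
    rw [← Complex.sq_norm, hw]; norm_num
  rw [Complex.norm_def]
  congr 1
  rw [Complex.normSq_apply] at hns ⊢
  simp only [Complex.add_re, Complex.add_im, Complex.ofReal_re, Complex.ofReal_im]
  nlinarith [hns]

lemma pair_aux {w : ℂ} (hw : ‖w‖ = 1) (hc : 0 ≤ w.re) {s t : ℝ}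
    (hs : 0 ≤ s) (hst : s ≤ t) (ht : t ≤ 1) :
    logPlus (‖s + w‖) + logPlus (‖s - w‖) ≤
      logPlus (‖t + w‖) + logPlus (‖t - w‖) := by
  have hw' : ‖-w‖ = 1 := by rwa [norm_neg]
  have e1 : ∀ u : ℝ, ‖u - w‖ = Real.sqrt (u^2 - 2*u*w.re + 1) := by
    intro u
    rw [sub_eq_add_neg, abs_ofReal_add u (-w) hw', Complex.neg_re]
    ring_nf
  have hA : logPlus (‖s + w‖) ≤ logPlus (‖t + w‖) := by
    apply logPlus_mono
    rw [abs_ofReal_add s w hw, abs_ofReal_add t w hw]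
    apply Real.sqrt_le_sqrt
    nlinarith
  have hB : logPlus (‖s - w‖) ≤ logPlus (‖t - w‖) := by
    rcases le_total s (2 * w.re) with h | h
    · have : ‖s - w‖ ≤ 1 := by
        rw [e1 s]
        apply Real.sqrt_le_one.mpr
        nlinarith
      rw [logPlus_of_le_one this]
      exact logPlus_nonneg _
    · apply logPlus_mono
      rw [e1 s, e1 t]
      apply Real.sqrt_le_sqrt
      nlinarith
  linarith

lemma pair {w : ℂ} (hw : ‖w‖ = 1) {s t : ℝ}
    (hs : 0 ≤ s) (hst : s ≤ t) (ht : t ≤ 1) :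
    logPlus (‖s + w‖) + logPlus (‖s - w‖) ≤
      logPlus (‖t + w‖) + logPlus (‖t - w‖) := by
  rcases le_total 0 w.re with hc | hc
  · exact pair_aux hw hc hs hst ht
  · have hw' : ‖-w‖ = 1 := by rwa [norm_neg]
    have hc' : 0 ≤ (-w).re := by simpa using neg_nonneg.2 hc
    have := pair_aux hw' hc' hs hst ht
    simp only [sub_neg_eq_add] at this
    have es : ∀ u : ℝ, ‖(u:ℂ) + -w‖ = ‖(u:ℂ) - w‖ := by
      intro u; rw [← sub_eq_add_neg]
    rw [es s, es t] at this
    linarith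

lemma E_continuous : Continuous E :=
  Complex.continuous_exp.comp (continuous_const.mul Complex.continuous_ofReal)

lemma F_continuous (t : ℝ) : Continuous (F t) :=
  logPlus_continuous.comp (continuous_norm.comp (continuous_const.add E_continuous))

lemma Ifun_eq (t : ℝ) : Ifun t = (∫ θ in (0:ℝ)..1, F t θ) - logPlus t := rfl

lemma split (t : ℝ) :
    (∫ θ in (0:ℝ)..1, F t θ) = ∫ θ in (0:ℝ)..(1/2:ℝ), (F t θ + F t (θ + 1/2)) := by
  have hi : ∀ a b : ℝ, IntervalIntegrable (F t) volume a b :=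
    fun a b => (F_continuous t).intervalIntegrable a b
  have h2 : IntervalIntegrable (fun θ => F t (θ + 1/2)) volume 0 (1/2) :=
    ((F_continuous t).comp (continuous_id.add continuous_const)).intervalIntegrable _ _
  rw [intervalIntegral.integral_add (hi 0 (1/2)) h2,
    intervalIntegral.integral_comp_add_right (fun x => F t x) (1/2)]
  norm_num
  exact (intervalIntegral.integral_add_adjacent_intervals (hi 0 (1/2)) (hi (1/2) 1)).symm

lemma mono_main {s t : ℝ} (hs : 0 ≤ s) (hst : s ≤ t) (ht : t ≤ 1) : Ifun s ≤ Ifun t := by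
  rw [Ifun_eq, Ifun_eq, logPlus_of_le_one (hst.trans ht), logPlus_of_le_one ht,
    sub_zero, sub_zero, split s, split t]
  apply intervalIntegral.integral_mono_on (by norm_num)
  · exact (((F_continuous s)).add ((F_continuous s).comp
      (continuous_id.add continuous_const))).intervalIntegrable _ _
  · exact (((F_continuous t)).add ((F_continuous t).comp
      (continuous_id.add continuous_const))).intervalIntegrable _ _
  · intro θ _
    have hp := pair (E_abs θ) hs hst ht
    simp only [F, E_add_half θ, ← sub_eq_add_neg] at *
    convert hp using 3 <;> rw [sub_eq_add_neg]

lemma slit {t : ℝ} (ht : 1 < t) {z : ℂ} (hz : ‖z‖ ≤ 1) :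
    (t : ℂ) + z ∈ Complex.slitPlane := by
  left
  have : |z.re| ≤ 1 := (Complex.abs_re_le_norm z).trans hz
  simp only [Complex.add_re, Complex.ofReal_re]
  have := abs_le.1 this
  linarith

lemma cauchy_circle {t : ℝ} (ht : 1 < t) :
    (∫ θ in (0:ℝ)..(2*π), Complex.log (t + Complex.exp (θ * Complex.I)))
      = 2 * π * Complex.log t := by
  set f : ℂ → ℂ := fun z => Complex.log (t + z) with hf
  have hd : DiffContOnCl ℂ f (ball (0:ℂ) 1) := by
    apply DifferentiableOn.diffContOnCl
    rw [closure_ball (0:ℂ) one_ne_zero]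
    intro z hz
    have hz' : ‖z‖ ≤ 1 := by
      simpa [Complex.dist_eq] using mem_closedBall.1 hz
    exact (((differentiableAt_const _).add differentiableAt_id).clog
      (slit ht hz')).differentiableWithinAt
  have key := hd.circleIntegral_sub_inv_smul (mem_ball_self one_pos)
  rw [circleIntegral] at key
  simp only [deriv_circleMap, circleMap, sub_zero, smul_eq_mul, zero_add, one_mul, Complex.ofReal_one] at key
  have e1 : ∀ θ : ℝ, Complex.exp (θ * Complex.I) * Complex.I *
      ((Complex.exp (θ * Complex.I))⁻¹ * f (Complex.exp (θ * Complex.I)))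
      = Complex.I * f (Complex.exp (θ * Complex.I)) := by
    intro θ
    have : Complex.exp (θ * Complex.I) ≠ 0 := Complex.exp_ne_zero _
    field_simp
  rw [intervalIntegral.integral_congr (fun θ _ => e1 θ)] at key
  rw [intervalIntegral.integral_const_mul] at key
  have key2 : Complex.I * (∫ θ in (0:ℝ)..(2*π), f (Complex.exp (θ * Complex.I)))
      = Complex.I * (2 * π * f 0) := by rw [key]; ring
  have := mul_left_cancel₀ Complex.I_ne_zero key2
  simpa [hf] using this

lemma E_cont : Continuous E :=
  Complex.continuous_exp.comp (continuous_const.mul Complex.continuous_ofReal)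

lemma clog_cont {t : ℝ} (ht : 1 < t) :
    Continuous (fun θ : ℝ => Complex.log ((t:ℂ) + E θ)) := by
  apply Continuous.clog (continuous_const.add E_cont)
  intro θ
  exact slit ht (le_of_eq (by
    unfold E; rw [Complex.norm_exp]; norm_num [Complex.mul_re, Complex.mul_im]))

lemma complex_jensen {t : ℝ} (ht : 1 < t) :
    (∫ θ in (0:ℝ)..1, Complex.log ((t:ℂ) + E θ)) = Complex.log t := by
  have hE : ∀ θ : ℝ, (E θ) = Complex.exp ((2*π*θ : ℝ) * Complex.I) := by
    intro θ; unfold E; congr 1; push_cast; ring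
  have h1 : (∫ θ in (0:ℝ)..1, Complex.log ((t:ℂ) + E θ))
      = ∫ θ in (0:ℝ)..1, (fun x : ℝ => Complex.log ((t:ℂ) + Complex.exp (x * Complex.I))) (2*π*θ) := by
    apply intervalIntegral.integral_congr
    intro θ _
    simp only [hE θ]
  rw [h1]
  have h2 := intervalIntegral.integral_comp_mul_left
    (a := 0) (b := 1) (fun x : ℝ => Complex.log ((t:ℂ) + Complex.exp (x * Complex.I)))
    (c := 2*π) (by positivity)
  simp only [mul_zero, mul_one] at h2
  rw [h2, cauchy_circle ht]
  have hp : (π:ℝ) ≠ 0 := Real.pi_ne_zero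
  rw [Complex.real_smul]
  push_cast
  field_simp [Complex.ofReal_ne_zero.mpr hp]

lemma jensen {t : ℝ} (ht : 1 < t) :
    (∫ θ in (0:ℝ)..1, Real.log (‖(t:ℂ) + E θ‖)) = Real.log t := by
  have h1 : ∀ θ : ℝ, Real.log (‖(t:ℂ) + E θ‖)
      = Complex.reCLM (Complex.log ((t:ℂ) + E θ)) :=
    fun θ => (Complex.log_re _).symm
  rw [intervalIntegral.integral_congr (fun θ _ => h1 θ),
    ContinuousLinearMap.intervalIntegral_comp_comm _ ((clog_cont ht).intervalIntegrable 0 1),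
    complex_jensen ht]
  exact Complex.log_ofReal_re t

lemma abs_lower {u : ℝ} (hu : 0 ≤ u) (θ : ℝ) : u - 1 ≤ ‖(u:ℂ) + E θ‖ := by
  have h1 : ‖(u:ℂ)‖ ≤ ‖(u:ℂ) + E θ‖ + ‖E θ‖ := by
    calc ‖(u:ℂ)‖ = ‖((u:ℂ) + E θ) + (- E θ)‖ := by ring_nf
    _ ≤ ‖(u:ℂ) + E θ‖ + ‖- E θ‖ := norm_add_le _ _
    _ = ‖(u:ℂ) + E θ‖ + ‖E θ‖ := by rw [norm_neg]
  rw [Complex.norm_real, Real.norm_eq_abs, abs_of_nonneg hu, E_abs] at h1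
  linarith

lemma G_cont {u : ℝ} (hu : 1 < u) :
    Continuous (fun θ => Real.log (‖(u:ℂ) + E θ‖)) := by
  apply Continuous.log (continuous_norm.comp (continuous_const.add E_cont))
  intro θ
  have h := abs_lower (by linarith : (0:ℝ) ≤ u) θ
  simp only [Function.comp_apply, Pi.add_apply]
  exact ne_of_gt (by linarith)

lemma max_sub_anti {x y : ℝ} (hxy : x ≤ y) : max 0 y - y ≤ max 0 x - x := by
  rcases le_total 0 x with h | h
  · rcases le_total 0 y with h' | h'
    · rw [max_eq_right h, max_eq_right h']; linarith
    · rw [max_eq_left h', max_eq_right h]; linarith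
  · rcases le_total 0 y with h' | h'
    · rw [max_eq_right h', max_eq_left h]; linarith
    · rw [max_eq_left h, max_eq_left h']; linarith

lemma abs_add_mono {s t : ℝ} (hs : 1 ≤ s) (hst : s ≤ t) (θ : ℝ) :
    ‖(s:ℂ) + E θ‖ ≤ ‖(t:ℂ) + E θ‖ := by
  rw [abs_ofReal_add s _ (E_abs θ), abs_ofReal_add t _ (E_abs θ)]
  apply Real.sqrt_le_sqrt
  have hre : |(E θ).re| ≤ 1 := (Complex.abs_re_le_norm _).trans (le_of_eq (E_abs θ))
  have := abs_le.1 hre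
  nlinarith

lemma anti_main {s t : ℝ} (hs : 1 < s) (hst : s ≤ t) : Ifun t ≤ Ifun s := by
  have ht : 1 < t := lt_of_lt_of_le hs hst
  rw [Ifun_eq, Ifun_eq, logPlus_of_one_le hs.le, logPlus_of_one_le ht.le,
    ← jensen hs, ← jensen ht,
    ← intervalIntegral.integral_sub ((F_continuous t).intervalIntegrable _ _)
      ((G_cont ht).intervalIntegrable _ _),
    ← intervalIntegral.integral_sub ((F_continuous s).intervalIntegrable _ _)
      ((G_cont hs).intervalIntegrable _ _)]
  apply intervalIntegral.integral_mono_on (by norm_num)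
  · exact ((F_continuous t).sub (G_cont ht)).intervalIntegrable _ _
  · exact ((F_continuous s).sub (G_cont hs)).intervalIntegrable _ _
  · intro θ _
    have ha : 0 < ‖(s:ℂ) + E θ‖ :=
      lt_of_lt_of_le (by linarith) (abs_lower (by linarith) θ)
    have hb : 0 < ‖(t:ℂ) + E θ‖ :=
      lt_of_lt_of_le (by linarith) (abs_lower (by linarith) θ)
    have hab := abs_add_mono hs.le hst θ
    have hlog : Real.log (‖(s:ℂ) + E θ‖) ≤ Real.log (‖(t:ℂ) + E θ‖) :=
      Real.log_le_log ha hab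
    show F t θ - Real.log (‖(t:ℂ) + E θ‖) ≤
      F s θ - Real.log (‖(s:ℂ) + E θ‖)
    unfold F
    rw [logPlus_eq_max ha, logPlus_eq_max hb]
    exact max_sub_anti hlog

lemma lip {u v : ℝ} (hu : 0 ≤ u) (huv : u ≤ v) : Ifun v ≤ Ifun u + (v - u) := by
  rw [Ifun_eq, Ifun_eq]
  have h1 : logPlus u ≤ logPlus v := logPlus_mono huv
  have h2 : (∫ θ in (0:ℝ)..1, F v θ) ≤ (∫ θ in (0:ℝ)..1, F u θ) + (v - u) := by
    have he : (∫ θ in (0:ℝ)..1, F u θ) + (v-u) = ∫ θ in (0:ℝ)..1, (F u θ + (v-u)) := by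
      rw [intervalIntegral.integral_add ((F_continuous u).intervalIntegrable _ _)
        intervalIntegrable_const, intervalIntegral.integral_const]
      simp
    rw [he]
    apply intervalIntegral.integral_mono_on (by norm_num)
      ((F_continuous v).intervalIntegrable _ _)
      (((F_continuous u).add continuous_const).intervalIntegrable _ _)
    intro θ _
    have habs : ‖(v:ℂ) + E θ‖ ≤ ‖(u:ℂ) + E θ‖ + (v - u) := by
      have hrw : ((v:ℂ) + E θ) = ((u:ℂ) + E θ) + ((v - u : ℝ) : ℂ) := by push_cast; ring
      rw [hrw]
      calc ‖((u:ℂ) + E θ) + ((v - u : ℝ) : ℂ)‖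
          ≤ ‖(u:ℂ) + E θ‖ + ‖((v - u : ℝ) : ℂ)‖ := norm_add_le _ _
      _ = ‖(u:ℂ) + E θ‖ + (v - u) := by
          rw [Complex.norm_real, Real.norm_eq_abs, abs_of_nonneg (by linarith)]
    calc F v θ ≤ logPlus (‖(u:ℂ) + E θ‖ + (v - u)) := logPlus_mono habs
    _ ≤ F u θ + (v - u) := logPlus_add_le (by linarith)
  linarith

lemma anti_full {s t : ℝ} (hs : 1 ≤ s) (hst : s ≤ t) : Ifun t ≤ Ifun s := by
  rcases eq_or_lt_of_le hst with rfl | hlt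
  · exact le_rfl
  apply le_of_forall_pos_le_add
  intro ε hε
  set s' := min (s + ε) t with hs'
  have hs1 : 1 < s' := lt_min (by linarith) (by linarith)
  have h1 : Ifun t ≤ Ifun s' := anti_main hs1 (min_le_right _ _)
  have h2 : Ifun s' ≤ Ifun s + (s' - s) := lip (by linarith) (le_min (by linarith) hlt.le)
  have h3 : s' ≤ s + ε := min_le_left _ _
  linarith

theorem stmt3 :
    MonotoneOn Ifun (Set.Icc (0:ℝ) 1) ∧
    AntitoneOn Ifun (Set.Icc (1:ℝ) 2) ∧
    (∀ t : ℝ, 0 ≤ t → Ifun t ≤ Ifun 1) ∧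
    IsGreatest (Ifun '' Set.Ici (0:ℝ)) (Ifun 1) := by
  have M : MonotoneOn Ifun (Set.Icc (0:ℝ) 1) := fun a ha b hb hab => mono_main ha.1 hab hb.2
  have A : AntitoneOn Ifun (Set.Icc (1:ℝ) 2) := fun a ha b hb hab => anti_full ha.1 hab
  have P : ∀ t : ℝ, 0 ≤ t → Ifun t ≤ Ifun 1 := by
    intro t ht
    rcases le_total t 1 with h | h
    · exact mono_main ht h le_rfl
    · exact anti_full le_rfl h
  exact ⟨M, A, P, ⟨⟨1, Set.mem_Ici.mpr zero_le_one, rfl⟩,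
    by rintro x ⟨t, ht, rfl⟩; exact P t ht⟩⟩
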